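/- Let $p>1$, $\epsilon>0$, $b_\epsilon(t) = t(t^2+\epsilon)^{(p-2)/2}$, and $B_\epsilon(t) = \int_0^t b_\epsilon(\tau)\,d\tau$. Then for all $t > 0$: $\min\{2,p\} \le \frac{t\, b_\epsilon(t)}{B_\epsilon(t)} \le \max\{2,p\}$. -/

import Mathlib

theorem stmt_9 (p ε : ℝ) (hp : 1 < p) (hε : 0 < ε) :
    ∀ t : ℝ, 0 < t →
      min 2 p ≤
          t * (t * (t ^ 2 + ε) ^ ((p - 2) / 2)) /
            (∫ τ in (0:ℝ)..t, τ * (τ ^ 2 + ε) ^ ((p - 2) / 2)) ∧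
        t * (t * (t ^ 2 + ε) ^ ((p - 2) / 2)) /
            (∫ τ in (0:ℝ)..t, τ * (τ ^ 2 + ε) ^ ((p - 2) / 2)) ≤ max 2 p := by
  intro t ht
  have hp0 : 0 < p := lt_trans one_pos hp
  set q : ℝ := p / 2 with hq_def
  have hq : 0 < q := by positivity
  have ht2 : 0 < t ^ 2 := pow_pos ht 2
  have hu : 0 < t ^ 2 + ε := by positivity
  have hεu : ε < t ^ 2 + ε := by linarith
  have hexp : (p - 2) / 2 = q - 1 := by rw [hq_def]; ring
  -- antiderivative
  have hderiv : ∀ τ : ℝ, HasDerivAt (fun x => (x ^ 2 + ε) ^ q / p)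
      (τ * (τ ^ 2 + ε) ^ ((p - 2) / 2)) τ := by
    intro τ
    have hτu : (0:ℝ) < τ ^ 2 + ε := by positivity
    have h1 : HasDerivAt (fun x : ℝ => x ^ 2 + ε) (2 * τ) τ := by
      simpa using (hasDerivAt_pow 2 τ).add_const ε
    have h2 : HasDerivAt (fun y : ℝ => y ^ q) (q * (τ ^ 2 + ε) ^ (q - 1)) (τ ^ 2 + ε) :=
      Real.hasDerivAt_rpow_const (Or.inl hτu.ne')
    have h3 := (h2.comp τ h1).div_const p
    refine h3.congr_deriv (Eq.symm ?_)
    rw [hexp, hq_def]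
    field_simp
  have hcont : Continuous fun τ : ℝ => τ * (τ ^ 2 + ε) ^ ((p - 2) / 2) := by
    apply continuous_id.mul
    apply Continuous.rpow_const (by continuity)
    intro x; left; positivity
  have hint : (∫ τ in (0:ℝ)..t, τ * (τ ^ 2 + ε) ^ ((p - 2) / 2))
      = ((t ^ 2 + ε) ^ q - ε ^ q) / p := by
    rw [intervalIntegral.integral_eq_sub_of_hasDerivAt (fun τ _ => hderiv τ)
      (hcont.intervalIntegrable 0 t)]
    norm_num
    ring
  -- MVT
  obtain ⟨c, hc, hslope⟩ := exists_hasDerivAt_eq_slope (fun x : ℝ => x ^ q)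
    (fun x => q * x ^ (q - 1)) hεu
    (fun x _ => (Real.continuousAt_rpow_const x q (Or.inr hq.le)).continuousWithinAt)
    (fun x hx => Real.hasDerivAt_rpow_const (Or.inl (lt_trans hε hx.1).ne'))
  obtain ⟨hc1, hc2⟩ := hc
  have hcpos : 0 < c := lt_trans hε hc1
  have hA : (t ^ 2 + ε) ^ q - ε ^ q = q * c ^ (q - 1) * t ^ 2 := by
    have h : t ^ 2 + ε - ε = t ^ 2 := by ring
    rw [h] at hslope
    field_simp at hslope
    linarith [hslope]
  have hApos : 0 < (t ^ 2 + ε) ^ q - ε ^ q := by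
    rw [hA]; positivity
  have hBpos : 0 < ((t ^ 2 + ε) ^ q - ε ^ q) / p := by positivity
  rw [hint, hexp]
  set u : ℝ := t ^ 2 + ε
  set A : ℝ := u ^ q - ε ^ q with hA_def
  have huq : u ^ (q - 1) * u = u ^ q := by
    rw [← Real.rpow_add_one hu.ne']; ring_nf
  have hεq : ε ^ (q - 1) * ε = ε ^ q := by
    rw [← Real.rpow_add_one hε.ne']; ring_nf
  rw [div_le_iff₀ hBpos, le_div_iff₀ hBpos]
  constructor
  · rcases le_total 2 p with h2p | h2p
    · -- p ≥ 2, min = 2, use MVT form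
      rw [min_eq_left h2p]
      have hq1 : 0 ≤ q - 1 := by rw [hq_def]; linarith
      have key : c ^ (q - 1) ≤ u ^ (q - 1) :=
        Real.rpow_le_rpow hcpos.le hc2.le hq1
      rw [hA, div_eq_mul_inv]
      have he : 2 * (q * c ^ (q - 1) * t ^ 2 * p⁻¹) = c ^ (q - 1) * t ^ 2 := by
        rw [hq_def]; field_simp
      rw [he]
      have : t * (t * u ^ (q - 1)) = u ^ (q - 1) * t ^ 2 := by ring
      rw [this]
      exact mul_le_mul_of_nonneg_right key ht2.le
    · -- p ≤ 2, min = p : need t² u^{q-1} ≥ A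
      rw [min_eq_right h2p]
      have hq1 : q - 1 ≤ 0 := by rw [hq_def]; linarith
      have key : u ^ (q - 1) ≤ ε ^ (q - 1) :=
        Real.rpow_le_rpow_of_nonpos hε hεu.le hq1
      have h1 : A ≤ t ^ 2 * u ^ (q - 1) := by
        have h2 : ε * u ^ (q - 1) ≤ ε ^ q := by
          rw [← hεq]; nlinarith
        have hAle : A ≤ u ^ q - ε * u ^ (q - 1) := by
          rw [hA_def]; linarith
        calc A ≤ u ^ q - ε * u ^ (q - 1) := hAle
          _ = t ^ 2 * u ^ (q - 1) := by rw [← huq]; ring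
      have h3 : p * (A / p) = A := by field_simp
      rw [h3]
      calc A ≤ t ^ 2 * u ^ (q - 1) := h1
        _ = t * (t * u ^ (q - 1)) := by ring
  · rcases le_total 2 p with h2p | h2p
    · -- p ≥ 2, max = p : need t² u^{q-1} ≤ A
      rw [max_eq_right h2p]
      have hq1 : 0 ≤ q - 1 := by rw [hq_def]; linarith
      have key : ε ^ (q - 1) ≤ u ^ (q - 1) :=
        Real.rpow_le_rpow hε.le hεu.le hq1
      have h1 : t ^ 2 * u ^ (q - 1) ≤ A := by
        have h2 : ε ^ q ≤ ε * u ^ (q - 1) := by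
          rw [← hεq]; nlinarith
        have h4 : u ^ q - ε * u ^ (q - 1) ≤ A := by rw [hA_def]; linarith
        calc t ^ 2 * u ^ (q - 1) = u ^ q - ε * u ^ (q - 1) := by rw [← huq]; ring
          _ ≤ A := h4
      have h3 : p * (A / p) = A := by field_simp
      rw [h3]
      calc t * (t * u ^ (q - 1)) = t ^ 2 * u ^ (q - 1) := by ring
        _ ≤ A := h1
    · -- p ≤ 2, max = 2, MVT form
      rw [max_eq_left h2p]
      have hq1 : q - 1 ≤ 0 := by rw [hq_def]; linarith
      have key : u ^ (q - 1) ≤ c ^ (q - 1) :=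
        Real.rpow_le_rpow_of_nonpos hcpos hc2.le hq1
      rw [hA]
      have h2 : 2 * (q * c ^ (q - 1) * t ^ 2 / p) = c ^ (q - 1) * t ^ 2 := by
        rw [hq_def]; field_simp
      rw [h2]
      calc t * (t * u ^ (q - 1)) = u ^ (q - 1) * t ^ 2 := by ring
        _ ≤ c ^ (q - 1) * t ^ 2 := mul_le_mul_of_nonneg_right key ht2.le
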